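/- Let k be a field of characteristic p, P a finite p-group, G a finite group containing P. Suppose Y ⊆ G is a finite subset containing a set of representatives of N/PC for subgroups PC ≤ N ≤ G with N normalizing P, and suppose that for each x ∈ Y the map t_x(ζ) = tr^P_{P∩xPx⁻¹} res^{xPx⁻¹}_{P∩xPx⁻¹}(ˣζ) equals t_y(ζ) for some y ∈ N whenever x ∈ N, and equals 0 whenever x ∉ N. Then the image of t_Y = Σ_{x∈Y} t_x is contained in tr^N_{PC}(H*(P,k)) ⊆ H*(P,k)^{N/PC} — the subspace of N/PC-invariant classes. -/

import Mathlib

/-- Let `P` be a finite `p`-subgroup of `G`, `PC ≤ N ≤ N_G(P)`, and let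
`ρ` be the conjugation action of `N` on `H*(P,k)` (trivial on `PC`).  Suppose the finite
set `Y ⊆ G` contains a set of representatives of `N/PC` (indeed `Y ∩ N` is such a set),
that `t_x = t_y = ρ y` for some `y ∈ N` whenever `x ∈ Y ∩ N` (for `y ∈ N`, `t_y` is
conjugation by `y`), and that `t_x = 0` whenever `x ∈ Y \ N`.  Then the image of
`t_Y = Σ_{x∈Y} t_x` is contained in `tr^N_{PC}(H*(P,k)) ⊆ H*(P,k)^{N/PC}`: every value
of `t_Y` is a relative trace `Σ_{x ∈ Y∩N} ρ x η` and is invariant under `N`. -/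
theorem stmt14 {k : Type*} [Field k] {p : ℕ} [Fact p.Prime] [CharP k p]
    {G : Type*} [Group G] [Finite G]
    (P N PC : Subgroup G) (hP : IsPGroup p P)
    (hPCN : PC ≤ N) (hN : N ≤ Subgroup.normalizer (P : Set G))
    [DecidablePred fun g : G => g ∈ N]
    (A : Type*) [AddCommGroup A] [Module k A]
    (ρ : G → A →ₗ[k] A)
    (hρ_mul : ∀ m ∈ N, ∀ n ∈ N, ρ (m * n) = (ρ m).comp (ρ n))
    (hρ_pc : ∀ c ∈ PC, ρ c = LinearMap.id)
    (t : G → A →ₗ[k] A)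
    (Y : Finset G)
    (hYreps : ∀ n ∈ N, ∃! x, x ∈ Y ∧ x ∈ N ∧ x⁻¹ * n ∈ PC)
    (ht_in : ∀ x ∈ Y, x ∈ N → ∃ y ∈ N, t x = ρ y)
    (ht_conj : ∀ y ∈ N, t y = ρ y)
    (ht_out : ∀ x ∈ Y, x ∉ N → t x = 0) :
    (∀ ζ : A, ∃ η : A,
      ∑ x ∈ Y, t x ζ = ∑ x ∈ Y.filter (fun g => g ∈ N), ρ x η) ∧
    (∀ ζ : A, ∀ n ∈ N, ρ n (∑ x ∈ Y, t x ζ) = ∑ x ∈ Y, t x ζ) := by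
  classical
  set S := Y.filter (fun g : G => g ∈ N) with hS
  -- total representative function
  let F : G → G := fun m => if hm : m ∈ N then (hYreps m hm).choose else 1
  have hF : ∀ m (hm : m ∈ N), F m ∈ Y ∧ F m ∈ N ∧ (F m)⁻¹ * m ∈ PC := by
    intro m hm
    simp only [F, dif_pos hm]
    exact (hYreps m hm).choose_spec.1
  have hFuniq : ∀ m (hm : m ∈ N), ∀ x, (x ∈ Y ∧ x ∈ N ∧ x⁻¹ * m ∈ PC) → x = F m := by
    intro m hm x hx
    simp only [F, dif_pos hm]
    exact (hYreps m hm).choose_spec.2 x hx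
  have hsum : ∀ ζ : A, ∑ x ∈ Y, t x ζ = ∑ x ∈ S, ρ x ζ := by
    intro ζ
    rw [← Finset.sum_filter_add_sum_filter_not Y (fun g : G => g ∈ N) (fun x => t x ζ)]
    have h2 : ∑ x ∈ Y.filter (fun g : G => ¬ g ∈ N), t x ζ = 0 :=
      Finset.sum_eq_zero fun x hx => by
        simp only [Finset.mem_filter] at hx
        rw [ht_out x hx.1 hx.2]; simp
    rw [h2, add_zero]
    refine Finset.sum_congr rfl fun x hx => ?_
    simp only [hS, Finset.mem_filter] at hx
    rw [ht_conj x hx.2]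
  have key : ∀ n ∈ N, ∀ ζ : A, ∑ x ∈ S, ρ (n * x) ζ = ∑ x ∈ S, ρ x ζ := by
    intro n hn ζ
    have hmemS : ∀ x ∈ S, x ∈ Y ∧ x ∈ N := fun x hx => Finset.mem_filter.1 hx
    refine Finset.sum_nbij' (fun x => F (n * x)) (fun x => F (n⁻¹ * x)) ?_ ?_ ?_ ?_ ?_
    · intro a ha
      obtain ⟨haY, haN⟩ := hmemS a ha
      have h := hF (n * a) (mul_mem hn haN)
      exact Finset.mem_filter.2 ⟨h.1, h.2.1⟩
    · intro b hb
      obtain ⟨hbY, hbN⟩ := hmemS b hb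
      have h := hF (n⁻¹ * b) (mul_mem (inv_mem hn) hbN)
      exact Finset.mem_filter.2 ⟨h.1, h.2.1⟩
    · intro a ha
      obtain ⟨haY, haN⟩ := hmemS a ha
      have h := hF (n * a) (mul_mem hn haN)
      have hm : n⁻¹ * F (n * a) ∈ N := mul_mem (inv_mem hn) h.2.1
      refine (hFuniq _ hm a ⟨haY, haN, ?_⟩).symm
      have : a⁻¹ * (n⁻¹ * F (n * a)) = ((F (n * a))⁻¹ * (n * a))⁻¹ := by group
      rw [this]
      exact inv_mem h.2.2
    · intro b hb
      obtain ⟨hbY, hbN⟩ := hmemS b hb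
      have h := hF (n⁻¹ * b) (mul_mem (inv_mem hn) hbN)
      have hm : n * F (n⁻¹ * b) ∈ N := mul_mem hn h.2.1
      refine (hFuniq _ hm b ⟨hbY, hbN, ?_⟩).symm
      have : b⁻¹ * (n * F (n⁻¹ * b)) = ((F (n⁻¹ * b))⁻¹ * (n⁻¹ * b))⁻¹ := by group
      rw [this]
      exact inv_mem h.2.2
    · intro a ha
      obtain ⟨haY, haN⟩ := hmemS a ha
      have h := hF (n * a) (mul_mem hn haN)
      have hc : (F (n * a))⁻¹ * (n * a) ∈ N := hPCN h.2.2
      have : n * a = F (n * a) * ((F (n * a))⁻¹ * (n * a)) := by group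
      rw [show ρ (n * a) = ρ (F (n * a) * ((F (n * a))⁻¹ * (n * a))) from congrArg ρ this,
        hρ_mul _ h.2.1 _ hc, hρ_pc _ h.2.2]
      rfl
  constructor
  · exact fun ζ => ⟨ζ, hsum ζ⟩
  · intro ζ n hn
    rw [hsum, map_sum]
    have : ∀ x ∈ S, ρ n (ρ x ζ) = ρ (n * x) ζ := fun x hx => by
      rw [hρ_mul n hn x (Finset.mem_filter.1 hx).2]; rfl
    rw [Finset.sum_congr rfl this, key n hn ζ, ← hsum]
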